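/- Let ℬ = {ρ ∈ 𝒜 : (V,ρ) is Schur}. Then ℬ is open in 𝒜, the stabilizer in G of every point of ℬ equals H, and the induced action of the quotient complex Lie group Ḡ = G/H on ℬ is principal: the induced action of Ḡ on ℬ is free, and the map τ : ℬ × Ḡ → ℬ × ℬ, (ρ, ḡ) ↦ (ρ, ρḡ), is a homeomorphism onto its image (equivalently, for every ρ ∈ ℬ and every H-invariant neighbourhood W of the identity e in G there is a neighbourhood U of ρ in ℬ with P_G(U,U) ⊆ W). -/

import Mathlib

open Module

set_option synthInstance.maxHeartbeats 1000000
set_option maxHeartbeats 2000000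
set_option linter.unusedSectionVars false

variable {Q₀ Q₁ : Type*} [Fintype Q₀] [Fintype Q₁]
  (s t : Q₁ → Q₀)
  (V : Q₀ → Type*) [∀ a, NormedAddCommGroup (V a)] [∀ a, InnerProductSpace ℂ (V a)]
  [∀ a, FiniteDimensional ℂ (V a)]

/-- The representation `ρ ∈ 𝒜` is Schur: every endomorphism of `(V, ρ)` is a scalar
multiple of the identity. -/
def IsSchurPoint (ρ : ∀ α, V (s α) →L[ℂ] V (t α)) : Prop :=
  ∀ f : ∀ a, V a →ₗ[ℂ] V a,
    (∀ α, (f (t α)) ∘ₗ (ρ α : V (s α) →ₗ[ℂ] V (t α)) =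
      (ρ α : V (s α) →ₗ[ℂ] V (t α)) ∘ₗ (f (s α))) →
    ∃ c : ℂ, ∀ a, f a = c • LinearMap.id

/-- The right action of `G = ∏ₐ GL(V a)` on `𝒜`: `(ρ g)_α = g_{t α}⁻¹ ∘ ρ_α ∘ g_{s α}`. -/
noncomputable def actG (ρ : ∀ α, V (s α) →L[ℂ] V (t α)) (g : ∀ a, V a ≃ₗ[ℂ] V a) :
    ∀ α, V (s α) →L[ℂ] V (t α) :=
  fun α => LinearMap.toContinuousLinearMap
    ((g (t α)).symm.toLinearMap ∘ₗ (ρ α : V (s α) →ₗ[ℂ] V (t α)) ∘ₗ (g (s α)).toLinearMap)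

/-- The embedding of `G = ∏ₐ GL(V a)` into the topological space `∏ₐ (V a →L[ℂ] V a)`,
which induces the topology of `G`. -/
noncomputable def glEmbed (g : ∀ a, V a ≃ₗ[ℂ] V a) : ∀ a, V a →L[ℂ] V a :=
  fun a => LinearMap.toContinuousLinearMap (g a).toLinearMap


noncomputable def commMap (ρ : ∀ α, V (s α) →L[ℂ] V (t α)) :
    (∀ a, V a →L[ℂ] V a) →ₗ[ℂ] ∀ α, V (s α) →L[ℂ] V (t α) where
  toFun f := fun α => (f (t α)).comp (ρ α) - (ρ α).comp (f (s α))
  map_add' f g := by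
    funext α
    simp only [Pi.add_apply, ContinuousLinearMap.add_comp, ContinuousLinearMap.comp_add]
    abel
  map_smul' c f := by
    funext α
    simp only [Pi.smul_apply, ContinuousLinearMap.smul_comp, ContinuousLinearMap.comp_smul,
      smul_sub, RingHom.id_apply]

/-- identity element -/
noncomputable def eG : ∀ a, V a →L[ℂ] V a := fun a => ContinuousLinearMap.id ℂ (V a)

theorem commMap_eG (ρ : ∀ α, V (s α) →L[ℂ] V (t α)) : commMap s t V ρ (eG V) = 0 := by
  funext α; simp [commMap, eG]

theorem commMap_eq_zero_iff (ρ : ∀ α, V (s α) →L[ℂ] V (t α)) (f : ∀ a, V a →L[ℂ] V a) :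
    commMap s t V ρ f = 0 ↔
      ∀ α, (f (t α) : V (t α) →ₗ[ℂ] V (t α)) ∘ₗ (ρ α : V (s α) →ₗ[ℂ] V (t α)) =
        (ρ α : V (s α) →ₗ[ℂ] V (t α)) ∘ₗ (f (s α) : V (s α) →ₗ[ℂ] V (s α)) := by
  constructor
  · intro hx α
    have h := congrFun hx α
    simp only [commMap, LinearMap.coe_mk, AddHom.coe_mk, Pi.zero_apply, sub_eq_zero] at h
    ext x
    simpa using ContinuousLinearMap.ext_iff.mp h x
  · intro h
    funext α
    simp only [commMap, LinearMap.coe_mk, AddHom.coe_mk, Pi.zero_apply, sub_eq_zero]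
    ext x
    simpa using LinearMap.ext_iff.mp (h α) x

theorem isSchurPoint_iff_injective
    (C : Submodule ℂ (∀ a, V a →L[ℂ] V a))
    (hC : IsCompl (Submodule.span ℂ {eG V}) C)
    (ρ : ∀ α, V (s α) →L[ℂ] V (t α)) :
    IsSchurPoint s t V ρ ↔
      Function.Injective fun x : C => commMap s t V ρ (x : ∀ a, V a →L[ℂ] V a) := by
  constructor
  · intro hS
    have hrw : (fun x : C => commMap s t V ρ (x : ∀ a, V a →L[ℂ] V a))
        = ⇑((commMap s t V ρ) ∘ₗ C.subtype) := rfl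
    rw [hrw, injective_iff_map_eq_zero]
    intro x hx
    have hx' := (commMap_eq_zero_iff s t V ρ _).mp hx
    obtain ⟨c, hc⟩ := hS (fun a => ((x : ∀ a, V a →L[ℂ] V a) a : V a →ₗ[ℂ] V a)) hx'
    have hxe : (x : ∀ a, V a →L[ℂ] V a) = c • eG V := by
      funext a
      ext v
      simpa [eG] using LinearMap.ext_iff.mp (hc a) v
    have hmem : (x : ∀ a, V a →L[ℂ] V a) ∈ Submodule.span ℂ {eG V} ⊓ C := by
      refine ⟨?_, x.2⟩
      rw [hxe]
      exact Submodule.smul_mem _ c (Submodule.mem_span_singleton_self _)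
    rw [hC.inf_eq_bot, Submodule.mem_bot] at hmem
    exact Subtype.ext hmem
  · intro hInj f hf
    set F : ∀ a, V a →L[ℂ] V a := fun a => LinearMap.toContinuousLinearMap (f a) with hF
    have hfF : ∀ a, (F a : V a →ₗ[ℂ] V a) = f a := by
      intro a; ext v; simp [hF]
    have hFmem : F ∈ Submodule.span ℂ {eG V} ⊔ C := by
      rw [hC.sup_eq_top]; trivial
    obtain ⟨u, hu, v, hv, huv⟩ := Submodule.mem_sup.mp hFmem
    obtain ⟨c, hc⟩ := Submodule.mem_span_singleton.mp hu
    have hFcomm : commMap s t V ρ F = 0 := by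
      rw [commMap_eq_zero_iff]
      intro α
      rw [hfF, hfF]
      exact hf α
    have hvzero : (⟨v, hv⟩ : C) = 0 := by
      apply hInj
      show commMap s t V ρ v = commMap s t V ρ ((0 : C) : ∀ a, V a →L[ℂ] V a)
      have : v = F - c • eG V := by rw [← huv, ← hc]; abel
      rw [this]
      simp [map_sub, hFcomm, commMap_eG]
    have hv0 : v = 0 := congrArg Subtype.val hvzero
    refine ⟨c, fun a => ?_⟩
    have : F = c • eG V := by rw [← huv, ← hc, hv0, add_zero]
    have := congrFun this a
    rw [← hfF a, this]
    ext x; simp [eG]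

theorem commMap_add (ρ ρ' : ∀ α, V (s α) →L[ℂ] V (t α)) (f : ∀ a, V a →L[ℂ] V a) :
    commMap s t V (ρ + ρ') f = commMap s t V ρ f + commMap s t V ρ' f := by
  funext α
  simp only [commMap, LinearMap.coe_mk, AddHom.coe_mk, Pi.add_apply,
    ContinuousLinearMap.add_comp, ContinuousLinearMap.comp_add]
  abel

theorem commMap_smul (c : ℂ) (ρ : ∀ α, V (s α) →L[ℂ] V (t α)) (f : ∀ a, V a →L[ℂ] V a) :
    commMap s t V (c • ρ) f = c • commMap s t V ρ f := by
  funext α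
  simp only [commMap, LinearMap.coe_mk, AddHom.coe_mk, Pi.smul_apply,
    ContinuousLinearMap.smul_comp, ContinuousLinearMap.comp_smul, smul_sub]

noncomputable def phiC (C : Submodule ℂ (∀ a, V a →L[ℂ] V a)) :
    (∀ α, V (s α) →L[ℂ] V (t α)) →ₗ[ℂ] (↥C →L[ℂ] ∀ α, V (s α) →L[ℂ] V (t α)) where
  toFun ρ := LinearMap.toContinuousLinearMap ((commMap s t V ρ) ∘ₗ C.subtype)
  map_add' ρ ρ' := by
    have h : (commMap s t V (ρ + ρ')) ∘ₗ C.subtype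
        = (commMap s t V ρ) ∘ₗ C.subtype + (commMap s t V ρ') ∘ₗ C.subtype :=
      LinearMap.ext fun x => commMap_add s t V ρ ρ' x
    rw [h, map_add]
  map_smul' c ρ := by
    have h : (commMap s t V (c • ρ)) ∘ₗ C.subtype
        = c • ((commMap s t V ρ) ∘ₗ C.subtype) :=
      LinearMap.ext fun x => commMap_smul s t V c ρ x
    rw [h, map_smul]; rfl

theorem phiC_apply (C : Submodule ℂ (∀ a, V a →L[ℂ] V a))
    (ρ : ∀ α, V (s α) →L[ℂ] V (t α)) :
    ⇑(phiC s t V C ρ) = fun x : C => commMap s t V ρ (x : ∀ a, V a →L[ℂ] V a) :=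
  LinearMap.coe_toContinuousLinearMap' _

theorem phiC_continuous (C : Submodule ℂ (∀ a, V a →L[ℂ] V a)) :
    Continuous (phiC s t V C) :=
  LinearMap.continuous_of_finiteDimensional (𝕜 := ℂ) (E := ∀ α, V (s α) →L[ℂ] V (t α))
    (F' := ↥C →L[ℂ] ∀ α, V (s α) →L[ℂ] V (t α)) (phiC s t V C)

theorem isOpen_isSchurPoint :
    IsOpen {ρ : ∀ α, V (s α) →L[ℂ] V (t α) | IsSchurPoint s t V ρ} := by
  obtain ⟨C, hC⟩ := Submodule.exists_isCompl (Submodule.span ℂ {eG V})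
  have hset : {ρ : ∀ α, V (s α) →L[ℂ] V (t α) | IsSchurPoint s t V ρ}
      = (phiC s t V C) ⁻¹' {L | Function.Injective ⇑L} := by
    ext ρ
    rw [Set.mem_setOf_eq, Set.mem_preimage, Set.mem_setOf_eq, phiC_apply]
    exact isSchurPoint_iff_injective s t V C hC ρ
  rw [hset]
  exact (ContinuousLinearMap.isOpen_injective (𝕜 := ℂ) (E := ↥C)
    (F := ∀ α, V (s α) →L[ℂ] V (t α))).preimage (phiC_continuous s t V C)

theorem actG_apply (ρ : ∀ α, V (s α) →L[ℂ] V (t α)) (g : ∀ a, V a ≃ₗ[ℂ] V a)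
    (α : Q₁) (x : V (s α)) :
    actG s t V ρ g α x = (g (t α)).symm (ρ α (g (s α) x)) := by
  simp [actG, LinearMap.coe_toContinuousLinearMap']

theorem actG_eq_iff (ρ : ∀ α, V (s α) →L[ℂ] V (t α)) (g : ∀ a, V a ≃ₗ[ℂ] V a) :
    actG s t V ρ g = ρ ↔ ∀ (α : Q₁) (x : V (s α)), ρ α (g (s α) x) = g (t α) (ρ α x) := by
  constructor
  · intro hmain α x
    have h1 : actG s t V ρ g α x = ρ α x := by rw [hmain]
    rw [actG_apply] at h1
    rw [← h1]
    exact ((g (t α)).apply_symm_apply _).symm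
  · intro hmain
    funext α
    ext x
    rw [actG_apply, (g (t α)).symm_apply_eq]
    exact hmain α x

theorem stabilizer_eq (a₀ : Q₀) [Nontrivial (V a₀)]
    (ρ : ∀ α, V (s α) →L[ℂ] V (t α)) (hρ : IsSchurPoint s t V ρ)
    (g : ∀ a, V a ≃ₗ[ℂ] V a) :
    actG s t V ρ g = ρ ↔
      ∃ c : ℂ, c ≠ 0 ∧ ∀ a, (g a).toLinearMap = c • (LinearMap.id : V a →ₗ[ℂ] V a) := by
  rw [actG_eq_iff]
  constructor
  · intro hmain
    obtain ⟨c, hc⟩ := hρ (fun a => (g a).toLinearMap) (fun α => by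
      ext x
      simpa using (hmain α x).symm)
    refine ⟨c, ?_, hc⟩
    intro h0
    obtain ⟨v, hv⟩ := exists_ne (0 : V a₀)
    apply hv
    have h1 := LinearMap.congr_fun (hc a₀) v
    rw [h0, zero_smul] at h1
    exact (g a₀).map_eq_zero_iff.mp h1
  · rintro ⟨c, hc0, hc⟩ α x
    have hs' : g (s α) x = c • x := by simpa using LinearMap.congr_fun (hc (s α)) x
    have ht' : g (t α) (ρ α x) = c • ρ α x := by simpa using LinearMap.congr_fun (hc (t α)) (ρ α x)
    rw [hs', ht', map_smul]

noncomputable def scalarEquiv {M : Type*} [AddCommGroup M] [Module ℂ M] (c : ℂ) (hc : c ≠ 0) :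
    M ≃ₗ[ℂ] M where
  toFun x := c • x
  invFun x := c⁻¹ • x
  map_add' := smul_add c
  map_smul' r x := smul_comm c r x
  left_inv x := by simp [smul_smul, inv_mul_cancel₀ hc]
  right_inv x := by simp [smul_smul, mul_inv_cancel₀ hc]

theorem principal (a₀ : Q₀) [Nontrivial (V a₀)]
    (ρ : ∀ α, V (s α) →L[ℂ] V (t α)) (hρ : IsSchurPoint s t V ρ)
    (W : Set (∀ a, V a ≃ₗ[ℂ] V a))
    (hWinv : ∀ c : ℂ, c ≠ 0 → ∀ g ∈ W, ∀ g' : ∀ a, V a ≃ₗ[ℂ] V a,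
      (∀ a, (g' a).toLinearMap = c • (g a).toLinearMap) → g' ∈ W)
    (hWnhds : ∃ W₀ ∈ nhds (glEmbed V (fun a => LinearEquiv.refl ℂ (V a))),
      {g : ∀ a, V a ≃ₗ[ℂ] V a | glEmbed V g ∈ W₀} ⊆ W) :
    ∃ U : Set (∀ α, V (s α) →L[ℂ] V (t α)),
      IsOpen U ∧ ρ ∈ U ∧ (∀ σ ∈ U, IsSchurPoint s t V σ) ∧
      ∀ g : ∀ a, V a ≃ₗ[ℂ] V a, (∃ σ ∈ U, actG s t V σ g ∈ U) → g ∈ W := by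
  classical
  obtain ⟨W₀, hW₀, hWsub⟩ := hWnhds
  by_contra hcon
  push_neg at hcon
  have hchoice : ∀ n : ℕ, ∃ g : ∀ a, V a ≃ₗ[ℂ] V a,
      (∃ σ' ∈ Metric.ball ρ (1/(n+1)) ∩ {σ | IsSchurPoint s t V σ},
        actG s t V σ' g ∈ Metric.ball ρ (1/(n+1)) ∩ {σ | IsSchurPoint s t V σ}) ∧ g ∉ W := by
    intro n
    exact hcon _ ((Metric.isOpen_ball).inter (isOpen_isSchurPoint s t V))
      ⟨Metric.mem_ball_self (by positivity), hρ⟩ (fun σ hσ => hσ.2)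
  choose g hg hgW using hchoice
  choose σ hσmem hτmem using hg
  set τ : ℕ → ∀ α, V (s α) →L[ℂ] V (t α) := fun n => actG s t V (σ n) (g n) with hτ
  have hσt : Filter.Tendsto σ Filter.atTop (nhds ρ) := by
    rw [tendsto_iff_dist_tendsto_zero]
    exact squeeze_zero (fun n => dist_nonneg)
      (fun n => le_of_lt (Metric.mem_ball.mp (hσmem n).1))
      tendsto_one_div_add_atTop_nhds_zero_nat
  have hτt : Filter.Tendsto τ Filter.atTop (nhds ρ) := by
    rw [tendsto_iff_dist_tendsto_zero]
    exact squeeze_zero (fun n => dist_nonneg)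
      (fun n => le_of_lt (Metric.mem_ball.mp (hτmem n).1))
      tendsto_one_div_add_atTop_nhds_zero_nat
  have hlamne : ∀ n, glEmbed V (g n) ≠ 0 := by
    intro n h0
    obtain ⟨v, hv⟩ := exists_ne (0 : V a₀)
    apply hv
    have h1 : glEmbed V (g n) a₀ v = 0 := by rw [congrFun h0 a₀]; rfl
    have h2 : g n a₀ v = 0 := by simpa [glEmbed, LinearMap.coe_toContinuousLinearMap'] using h1
    exact (g n a₀).map_eq_zero_iff.mp h2
  have hlampos : ∀ n, 0 < ‖glEmbed V (g n)‖ := fun n => norm_pos_iff.mpr (hlamne n)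
  set h : ℕ → ∀ a, V a →L[ℂ] V a :=
    fun n => ((‖glEmbed V (g n)‖ : ℝ) : ℂ)⁻¹ • glEmbed V (g n) with hh
  have hnormcast : ∀ n, ‖((‖glEmbed V (g n)‖ : ℝ) : ℂ)‖ = ‖glEmbed V (g n)‖ := by
    intro n
    rw [Complex.norm_real, Real.norm_of_nonneg (norm_nonneg _)]
  have hsph : ∀ n, h n ∈ Metric.sphere (0 : ∀ a, V a →L[ℂ] V a) 1 := by
    intro n
    have hns := norm_smul (((‖glEmbed V (g n)‖ : ℝ) : ℂ))⁻¹ (glEmbed V (g n))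
    rw [mem_sphere_zero_iff_norm]
    show ‖((‖glEmbed V (g n)‖ : ℝ) : ℂ)⁻¹ • glEmbed V (g n)‖ = 1
    rw [hns, norm_inv, hnormcast, inv_mul_cancel₀ (hlampos n).ne']
  haveI : ProperSpace (∀ a, V a →L[ℂ] V a) := FiniteDimensional.proper ℂ _
  obtain ⟨hinf, hinfs, φ, hφ, hconv⟩ :=
    (isCompact_sphere (0 : ∀ a, V a →L[ℂ] V a) 1).tendsto_subseq hsph
  have key : ∀ n α, (σ n α).comp (h n (s α)) = (h n (t α)).comp (τ n α) := by
    intro n α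
    have base : (σ n α).comp (glEmbed V (g n) (s α)) = (glEmbed V (g n) (t α)).comp (τ n α) := by
      ext x
      simp only [ContinuousLinearMap.comp_apply, glEmbed,
        LinearMap.coe_toContinuousLinearMap', LinearEquiv.coe_coe, hτ]
      rw [actG_apply]
      exact ((g n (t α)).apply_symm_apply _).symm
    rw [hh]
    simp only [Pi.smul_apply, ContinuousLinearMap.comp_smul, ContinuousLinearMap.smul_comp]
    rw [base]
  have hlim : ∀ α, (ρ α).comp (hinf (s α)) = (hinf (t α)).comp (ρ α) := by
    intro α
    have hcomp1 : Continuous (fun p : (V (s α) →L[ℂ] V (t α)) × (V (s α) →L[ℂ] V (s α)) =>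
        p.1.comp p.2) := (isBoundedBilinearMap_comp (𝕜 := ℂ)).continuous
    have hcomp2 : Continuous (fun p : (V (t α) →L[ℂ] V (t α)) × (V (s α) →L[ℂ] V (t α)) =>
        p.1.comp p.2) := (isBoundedBilinearMap_comp (𝕜 := ℂ)).continuous
    have hσφ : Filter.Tendsto (fun k => σ (φ k) α) Filter.atTop (nhds (ρ α)) :=
      tendsto_pi_nhds.mp (hσt.comp hφ.tendsto_atTop) α
    have hτφ : Filter.Tendsto (fun k => τ (φ k) α) Filter.atTop (nhds (ρ α)) :=
      tendsto_pi_nhds.mp (hτt.comp hφ.tendsto_atTop) α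
    have hhs : Filter.Tendsto (fun k => h (φ k) (s α)) Filter.atTop (nhds (hinf (s α))) :=
      tendsto_pi_nhds.mp hconv (s α)
    have hht : Filter.Tendsto (fun k => h (φ k) (t α)) Filter.atTop (nhds (hinf (t α))) :=
      tendsto_pi_nhds.mp hconv (t α)
    have l1 : Filter.Tendsto (fun k => (σ (φ k) α).comp (h (φ k) (s α))) Filter.atTop
        (nhds ((ρ α).comp (hinf (s α)))) :=
      (hcomp1.tendsto _).comp (hσφ.prodMk_nhds hhs)
    have l2 : Filter.Tendsto (fun k => (h (φ k) (t α)).comp (τ (φ k) α)) Filter.atTop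
        (nhds ((hinf (t α)).comp (ρ α))) :=
      (hcomp2.tendsto _).comp (hht.prodMk_nhds hτφ)
    exact tendsto_nhds_unique (l1.congr (fun k => key (φ k) α)) l2
  obtain ⟨c, hc⟩ := hρ (fun a => (hinf a : V a →ₗ[ℂ] V a)) (fun α => by
    ext x
    simpa using (ContinuousLinearMap.ext_iff.mp (hlim α) x).symm)
  have hc0 : c ≠ 0 := by
    intro h0
    have hzero : hinf = 0 := by
      funext a
      ext x
      have := LinearMap.congr_fun (hc a) x
      rw [h0, zero_smul] at this
      simpa using this
    rw [mem_sphere_zero_iff_norm, hzero, norm_zero] at hinfs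
    exact zero_ne_one hinfs
  have hlimid : Filter.Tendsto (fun k => (c⁻¹ : ℂ) • h (φ k)) Filter.atTop
      (nhds (glEmbed V (fun a => LinearEquiv.refl ℂ (V a)))) := by
    have hid : (c⁻¹ : ℂ) • hinf = glEmbed V (fun a => LinearEquiv.refl ℂ (V a)) := by
      funext a
      ext x
      have hx := LinearMap.congr_fun (hc a) x
      simp only [LinearMap.smul_apply, LinearMap.id_coe, id_eq] at hx
      simp only [Pi.smul_apply, ContinuousLinearMap.smul_apply, glEmbed,
        LinearMap.coe_toContinuousLinearMap', LinearEquiv.coe_coe, LinearEquiv.refl_apply]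
      have : (hinf a) x = c • x := by simpa using hx
      rw [this, smul_smul, inv_mul_cancel₀ hc0, one_smul]
    rw [← hid]
    exact hconv.const_smul _
  set ν : ℕ → ℂ := fun k => ((‖glEmbed V (g (φ k))‖ : ℝ) : ℂ)⁻¹ * c⁻¹ with hν
  have hν0 : ∀ k, ν k ≠ 0 := fun k => mul_ne_zero
    (inv_ne_zero (Complex.ofReal_ne_zero.mpr (hlampos (φ k)).ne'))
    (inv_ne_zero hc0)
  set g' : ℕ → ∀ a, V a ≃ₗ[ℂ] V a :=
    fun k a => (g (φ k) a).trans (scalarEquiv (ν k) (hν0 k)) with hg'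
  have hglE : ∀ k, glEmbed V (g' k) = (c⁻¹ : ℂ) • h (φ k) := by
    intro k
    funext a
    ext x
    simp only [glEmbed, LinearMap.coe_toContinuousLinearMap', LinearEquiv.coe_coe, hg',
      LinearEquiv.trans_apply, Pi.smul_apply, ContinuousLinearMap.smul_apply, hh]
    show ν k • (g (φ k) a) x = c⁻¹ • (((‖glEmbed V (g (φ k))‖ : ℝ) : ℂ)⁻¹ •
      glEmbed V (g (φ k)) a) x
    simp only [ContinuousLinearMap.smul_apply, glEmbed, LinearMap.coe_toContinuousLinearMap',
      LinearEquiv.coe_coe, smul_smul, hν]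
    ring_nf
  have hev : ∀ᶠ k in Filter.atTop, glEmbed V (g' k) ∈ W₀ := by
    have hts : Filter.Tendsto (fun k => glEmbed V (g' k)) Filter.atTop
        (nhds (glEmbed V (fun a => LinearEquiv.refl ℂ (V a)))) := by
      rw [show (fun k => glEmbed V (g' k)) = (fun k => (c⁻¹ : ℂ) • h (φ k)) from funext hglE]
      exact hlimid
    exact hts hW₀
  obtain ⟨k, hk⟩ := hev.exists
  have hg'W : g' k ∈ W := hWsub hk
  refine hgW (φ k) ?_
  refine hWinv (((‖glEmbed V (g (φ k))‖ : ℝ) : ℂ) * c) (mul_ne_zero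
    (Complex.ofReal_ne_zero.mpr (hlampos (φ k)).ne') hc0) (g' k) hg'W (g (φ k)) ?_
  intro a
  ext x
  simp only [LinearMap.smul_apply]
  show g (φ k) a x = (((‖glEmbed V (g (φ k))‖ : ℝ) : ℂ) * c) • ((g' k a).toLinearMap x)
  have : (g' k a).toLinearMap x = ν k • (g (φ k) a) x := rfl
  rw [this, smul_smul, hν]
  have hμ : (((‖glEmbed V (g (φ k))‖ : ℝ) : ℂ) * c) *
      (((‖glEmbed V (g (φ k))‖ : ℝ) : ℂ)⁻¹ * c⁻¹) = 1 := by
    rw [mul_mul_mul_comm, mul_inv_cancel₀ (Complex.ofReal_ne_zero.mpr (hlampos (φ k)).ne'),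
      mul_inv_cancel₀ hc0, one_mul]
  rw [hμ, one_smul]

/-- the set `ℬ` of Schur points is open in `𝒜`; the stabilizer in `G` of
every point of `ℬ` equals `H = ℂ*·e`; and the induced action of `Ḡ = G/H` on `ℬ` is
principal: for every `ρ ∈ ℬ` and every `H`-invariant neighbourhood `W` of the identity
`e` in `G` there is a neighbourhood `U` of `ρ` in `ℬ` with `P_G(U,U) ⊆ W`. -/
theorem schur_locus_open_and_action_principal
    {Q₀ Q₁ : Type*} [Fintype Q₀] [Fintype Q₁] [Nonempty Q₀]
    (s t : Q₁ → Q₀)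
    (V : Q₀ → Type*) [∀ a, NormedAddCommGroup (V a)] [∀ a, InnerProductSpace ℂ (V a)]
    [∀ a, FiniteDimensional ℂ (V a)]
    (d : Q₀ → ℕ) (hd : d ≠ 0) (hdim : ∀ a, Module.finrank ℂ (V a) = d a) :
    -- (1) `ℬ` is open in `𝒜`
    IsOpen {ρ : ∀ α, V (s α) →L[ℂ] V (t α) | IsSchurPoint s t V ρ} ∧
    -- (2) the stabilizer of every point of `ℬ` equals `H`, in particular the induced
    -- action of `Ḡ = G/H` on `ℬ` is free
    (∀ ρ : ∀ α, V (s α) →L[ℂ] V (t α), IsSchurPoint s t V ρ →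
      ∀ g : ∀ a, V a ≃ₗ[ℂ] V a,
        (actG s t V ρ g = ρ ↔
          ∃ c : ℂ, c ≠ 0 ∧ ∀ a, (g a).toLinearMap = c • (LinearMap.id : V a →ₗ[ℂ] V a))) ∧
    -- (3) principality: for every `ρ ∈ ℬ` and every `H`-invariant neighbourhood `W` of
    -- the identity in `G` there is a neighbourhood `U` of `ρ` in `ℬ` with
    -- `P_G(U, U) ⊆ W`
    (∀ ρ : ∀ α, V (s α) →L[ℂ] V (t α), IsSchurPoint s t V ρ →
      ∀ W : Set (∀ a, V a ≃ₗ[ℂ] V a),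
        -- `W` is `H`-invariant
        (∀ c : ℂ, c ≠ 0 → ∀ g ∈ W, ∀ g' : ∀ a, V a ≃ₗ[ℂ] V a,
          (∀ a, (g' a).toLinearMap = c • (g a).toLinearMap) → g' ∈ W) →
        -- `W` is a neighbourhood of the identity `e` in `G` (for the topology induced
        -- from `∏ₐ (V a →L[ℂ] V a)`)
        (∃ W₀ ∈ nhds (glEmbed V (fun a => LinearEquiv.refl ℂ (V a))),
          {g : ∀ a, V a ≃ₗ[ℂ] V a | glEmbed V g ∈ W₀} ⊆ W) →
        ∃ U : Set (∀ α, V (s α) →L[ℂ] V (t α)),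
          IsOpen U ∧ ρ ∈ U ∧ (∀ σ ∈ U, IsSchurPoint s t V σ) ∧
          ∀ g : ∀ a, V a ≃ₗ[ℂ] V a, (∃ σ ∈ U, actG s t V σ g ∈ U) → g ∈ W) := by
  obtain ⟨a₀, ha₀⟩ := Function.ne_iff.mp hd
  haveI : Nontrivial (V a₀) := by
    have hpos : 0 < Module.finrank ℂ (V a₀) := by
      rw [hdim a₀]; exact Nat.pos_of_ne_zero ha₀
    exact Module.finrank_pos_iff.mp hpos
  exact ⟨isOpen_isSchurPoint s t V,
    fun ρ hρ g => stabilizer_eq s t V a₀ ρ hρ g,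
    fun ρ hρ W hWinv hWnhds => principal s t V a₀ ρ hρ W hWinv hWnhds⟩
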